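/- Suppose that for a pair of balanced r-partitions Π = {P_1,...,P_r} and Π' = {P_1',...,P_r'} of {1,...,n} with Π ≠ Π', we define s as the maximum over j of the size of the second largest set among {P_j ∩ P_1',..., P_j ∩ P_r'}. Then 1 ≤ s and e(K_Π ∩ K_{Π'}) ≤ e(K_Π) − s·n/(2r⁴). -/

import Mathlib

/-- The complete multipartite graph determined by an `r`-partition of the
vertex set, given as a colouring function. -/
def partGraph {n r : ℕ} (p : Fin n → Fin r) : SimpleGraph (Fin n) where
  Adj u v := p u ≠ p v
  symm := ⟨fun _ _ h e => h e.symm⟩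
  loopless := ⟨fun _ h => h rfl⟩

/-- The second largest value of a family `f : Fin r → ℕ`, computed as the
maximum over pairs of distinct indices of the minimum of the two values. -/
noncomputable def secondLargest {r : ℕ} (f : Fin r → ℕ) : ℕ :=
  (Finset.univ.filter fun q : Fin r × Fin r => q.1 ≠ q.2).sup
    fun q => min (f q.1) (f q.2)

theorem stmt_14 (n r : ℕ) (hr : 2 ≤ r) (p q : Fin n → Fin r)
    (hbalp : ∀ i : Fin r, (n : ℝ) / (2 * r) ≤ ({v : Fin n | p v = i}.ncard : ℝ))
    (hbalq : ∀ i : Fin r, (n : ℝ) / (2 * r) ≤ ({v : Fin n | q v = i}.ncard : ℝ))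
    (hne : ¬ ∃ σ : Equiv.Perm (Fin r), ∀ v : Fin n, q v = σ (p v)) :
    1 ≤ Finset.univ.sup (fun j : Fin r =>
        secondLargest fun i : Fin r => {v : Fin n | p v = j ∧ q v = i}.ncard)
    ∧ (((partGraph p ⊓ partGraph q).edgeSet.ncard : ℝ)
        ≤ ((partGraph p).edgeSet.ncard : ℝ)
          - ((Finset.univ.sup (fun j : Fin r =>
              secondLargest fun i : Fin r => {v : Fin n | p v = j ∧ q v = i}.ncard) : ℕ) : ℝ)
            * n / (2 * (r : ℝ) ^ 4)) := by
  classical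
  have hr0 : 0 < r := by omega
  -- convert ncards to Finset cards
  set bc : Fin r → Fin r → ℕ :=
    fun j i => (Finset.univ.filter fun v => p v = j ∧ q v = i).card with hbcdef
  have hbc : ∀ (j i : Fin r), {v : Fin n | p v = j ∧ q v = i}.ncard = bc j i := by
    intro j i
    rw [Set.ncard_eq_toFinset_card']
    simp [hbcdef, Set.toFinset_setOf]
  set Pc : Fin r → ℕ := fun j => (Finset.univ.filter fun v => p v = j).card with hPcdef
  set Qc : Fin r → ℕ := fun i => (Finset.univ.filter fun v => q v = i).card with hQcdef
  have hP : ∀ j : Fin r, ({v : Fin n | p v = j}.ncard : ℕ) = Pc j := by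
    intro j; rw [Set.ncard_eq_toFinset_card']; simp [hPcdef, Set.toFinset_setOf]
  have hQ : ∀ i : Fin r, ({v : Fin n | q v = i}.ncard : ℕ) = Qc i := by
    intro i; rw [Set.ncard_eq_toFinset_card']; simp [hQcdef, Set.toFinset_setOf]
  have hbalp' : ∀ j : Fin r, (n : ℝ) / (2 * r) ≤ (Pc j : ℝ) := by
    intro j; have := hbalp j; rwa [hP j] at this
  have hbalq' : ∀ i : Fin r, (n : ℝ) / (2 * r) ≤ (Qc i : ℝ) := by
    intro i; have := hbalq i; rwa [hQ i] at this
  -- n is positive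
  have hn : 0 < n := by
    rcases Nat.eq_zero_or_pos n with h | h
    · subst h; exact absurd ⟨Equiv.refl _, fun v => Fin.elim0 v⟩ hne
    · exact h
  have h2r : (0 : ℝ) < 2 * r := by positivity
  have hnat_bal_p : ∀ j : Fin r, n ≤ 2 * r * Pc j := by
    intro j
    have h := (div_le_iff₀ h2r).mp (hbalp' j)
    have h2 : (n : ℝ) ≤ ((2 * r * Pc j : ℕ) : ℝ) := by push_cast; nlinarith [h]
    exact_mod_cast h2
  have hnat_bal_q : ∀ i : Fin r, n ≤ 2 * r * Qc i := by
    intro i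
    have h := (div_le_iff₀ h2r).mp (hbalq' i)
    have h2 : (n : ℝ) ≤ ((2 * r * Qc i : ℕ) : ℝ) := by push_cast; nlinarith [h]
    exact_mod_cast h2
  have hPpos : ∀ j : Fin r, 0 < Pc j := by
    intro j; have := hnat_bal_p j; by_contra hc; push_neg at hc
    interval_cases h : Pc j <;> omega
  have hQpos : ∀ i : Fin r, 0 < Qc i := by
    intro i; have := hnat_bal_q i; by_contra hc; push_neg at hc
    interval_cases h : Qc i <;> omega
  -- sums
  have hPsum : ∑ j : Fin r, Pc j = n := by
    simp only [hPcdef]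
    rw [← Finset.card_eq_sum_card_fiberwise (fun v _ => Finset.mem_univ (p v))]
    simp
  have hQfib : ∀ i : Fin r, ∑ j : Fin r, bc j i = Qc i := by
    intro i
    simp only [hQcdef, hbcdef]
    rw [Finset.card_eq_sum_card_fiberwise
      (f := p) (t := Finset.univ) (fun v _ => Finset.mem_univ (p v))]
    apply Finset.sum_congr rfl
    intro j _
    congr 1
    ext v
    simp [and_comm]
  have hPfib : ∀ j : Fin r, ∑ i : Fin r, bc j i = Pc j := by
    intro j
    simp only [hPcdef, hbcdef]
    rw [Finset.card_eq_sum_card_fiberwise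
      (f := q) (t := Finset.univ) (fun v _ => Finset.mem_univ (q v))]
    apply Finset.sum_congr rfl
    intro i _
    congr 1
    ext v
    simp [and_comm]
  have hbP : ∀ (j i1 i2 : Fin r), i1 ≠ i2 → bc j i1 + bc j i2 ≤ Pc j := by
    intro j i1 i2 h12
    rw [← hPfib j]
    exact Finset.add_le_sum (f := fun i => bc j i) (fun _ _ => Nat.zero_le _)
      (Finset.mem_univ i1) (Finset.mem_univ i2) h12
  have hbQ : ∀ (i j1 j2 : Fin r), j1 ≠ j2 → bc j1 i + bc j2 i ≤ Qc i := by
    intro i j1 j2 h12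
    rw [← hQfib i]
    exact Finset.add_le_sum (f := fun j => bc j i) (fun _ _ => Nat.zero_le _)
      (Finset.mem_univ j1) (Finset.mem_univ j2) h12
  set s : ℕ := Finset.univ.sup (fun j : Fin r =>
      secondLargest fun i : Fin r => {v : Fin n | p v = j ∧ q v = i}.ncard) with hsdef
  have hrne : Nonempty (Fin r) := ⟨⟨0, by omega⟩⟩
  -- Part 1 : 1 ≤ s
  have hs1 : 1 ≤ s := by
    by_contra h
    push_neg at h
    have hs0 : s = 0 := by omega
    have hmin : ∀ (j i1 i2 : Fin r), i1 ≠ i2 → min (bc j i1) (bc j i2) = 0 := by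
      intro j i1 i2 h12
      have h1 : secondLargest (fun i => {v : Fin n | p v = j ∧ q v = i}.ncard) = 0 :=
        Nat.le_zero.mp (hs0 ▸ Finset.le_sup (f := fun j : Fin r =>
          secondLargest fun i : Fin r => {v : Fin n | p v = j ∧ q v = i}.ncard)
          (Finset.mem_univ j))
      have h2 : min ({v : Fin n | p v = j ∧ q v = i1}.ncard)
          ({v : Fin n | p v = j ∧ q v = i2}.ncard)
          ≤ secondLargest (fun i => {v : Fin n | p v = j ∧ q v = i}.ncard) := by
        apply Finset.le_sup (f := fun qq : Fin r × Fin r =>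
          min ({v : Fin n | p v = j ∧ q v = qq.1}.ncard)
              ({v : Fin n | p v = j ∧ q v = qq.2}.ncard))
          (b := (i1, i2))
        simp [h12]
      rw [hbc, hbc] at h2
      omega
    have hconst : ∀ v w : Fin n, p v = p w → q v = q w := by
      intro v w hpw
      by_contra hq
      have h1 : 0 < bc (p v) (q v) :=
        Finset.card_pos.mpr ⟨v, by simp [hbcdef]⟩
      have h2 : 0 < bc (p v) (q w) :=
        Finset.card_pos.mpr ⟨w, by simp [hbcdef, hpw.symm]⟩
      have := hmin (p v) (q v) (q w) hq
      omega
    have hw : ∀ j : Fin r, ∃ v : Fin n, p v = j := by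
      intro j
      obtain ⟨v, hv⟩ := Finset.card_pos.mp (hPpos j)
      exact ⟨v, (Finset.mem_filter.mp hv).2⟩
    choose w hwp using hw
    have hsurj : Function.Surjective (fun j => q (w j)) := by
      intro i
      obtain ⟨v, hv⟩ := Finset.card_pos.mp (hQpos i)
      have hqv : q v = i := (Finset.mem_filter.mp hv).2
      exact ⟨p v, (hconst (w (p v)) v (hwp (p v))).trans hqv⟩
    have hbij := Finite.surjective_iff_bijective.mp hsurj
    refine hne ⟨Equiv.ofBijective _ hbij, fun v => ?_⟩
    exact hconst v (w (p v)) (hwp (p v)).symm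
  refine ⟨hs1, ?_⟩
  -- obtain the row j0 and two columns i1 ≠ i2 realizing s
  obtain ⟨j0, -, hj0⟩ := Finset.exists_mem_eq_sup Finset.univ Finset.univ_nonempty
    (fun j : Fin r => secondLargest fun i : Fin r => {v : Fin n | p v = j ∧ q v = i}.ncard)
  have hpairne : ((Finset.univ.filter
      fun qq : Fin r × Fin r => qq.1 ≠ qq.2)).Nonempty := by
    refine ⟨(⟨0, by omega⟩, ⟨1, by omega⟩), ?_⟩
    simp [Fin.ext_iff]
  obtain ⟨⟨i1, i2⟩, hmem, hvt⟩ := Finset.exists_mem_eq_sup _ hpairne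
    (fun qq : Fin r × Fin r =>
      min ({v : Fin n | p v = j0 ∧ q v = qq.1}.ncard)
          ({v : Fin n | p v = j0 ∧ q v = qq.2}.ncard))
  have h12 : i1 ≠ i2 := by simpa using (Finset.mem_filter.mp hmem).2
  have hseq : s = min (bc j0 i1) (bc j0 i2) := by
    rw [hsdef, hj0]
    rw [secondLargest, hvt, hbc, hbc]
  have hi1 : s ≤ bc j0 i1 := by omega
  have hi2 : s ≤ bc j0 i2 := by omega
  -- row-maximum data for each column
  set m : Fin r → ℕ := fun i => Finset.univ.sup (fun j => bc j i) with hmdef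
  have hgex : ∀ i : Fin r, ∃ j : Fin r, m i = bc j i := by
    intro i
    obtain ⟨j, -, hj⟩ := Finset.exists_mem_eq_sup Finset.univ Finset.univ_nonempty
      (fun j => bc j i)
    exact ⟨j, hj⟩
  choose g hg using hgex
  have hmle : ∀ i : Fin r, m i ≤ Qc i := by
    intro i
    rw [hg i, ← hQfib i]
    exact Finset.single_le_sum (f := fun j => bc j i) (fun _ _ => Nat.zero_le _)
      (Finset.mem_univ (g i))
  have hQm : ∀ i : Fin r, Qc i ≤ r * m i := by
    intro i
    rw [← hQfib i]
    calc ∑ j : Fin r, bc j i ≤ (Finset.univ : Finset (Fin r)).card • m i :=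
          Finset.sum_le_card_nsmul _ _ _
            (fun j _ => Finset.le_sup (f := fun j => bc j i) (Finset.mem_univ j))
      _ = r * m i := by simp [mul_comm]
  -- key claim: some column has a large complement of its maximum piece
  have hkey : ∃ i : Fin r, s ≤ r ^ 2 * (Qc i - m i) := by
    by_contra hc
    push_neg at hc
    have hgj : ∀ i : Fin r, s ≤ bc j0 i → g i = j0 := by
      intro i hsbc
      by_contra hgi
      have h1 : bc j0 i + bc (g i) i ≤ Qc i := hbQ i j0 (g i) (Ne.symm hgi)
      have h2 : s ≤ Qc i - m i := by rw [hg i] at *; omega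
      have h3 : Qc i - m i ≤ r ^ 2 * (Qc i - m i) :=
        Nat.le_mul_of_pos_left _ (by positivity)
      have h4 := hc i
      omega
    have hg1 : g i1 = j0 := hgj i1 hi1
    have hg2 : g i2 = j0 := hgj i2 hi2
    -- g is not injective, find a row missed by g
    have hcard : (Finset.univ.image g).card < (Finset.univ : Finset (Fin r)).card := by
      apply lt_of_le_of_ne Finset.card_image_le
      intro hcardeq
      have hinj : Set.InjOn g (Finset.univ : Finset (Fin r)) :=
        Finset.injOn_of_card_image_eq hcardeq
      exact h12 (hinj (Finset.mem_univ i1) (Finset.mem_univ i2) (hg1.trans hg2.symm))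
    have hex : ∃ j' : Fin r, j' ∉ Finset.univ.image g := by
      by_contra hc2
      push_neg at hc2
      have : (Finset.univ : Finset (Fin r)) ⊆ Finset.univ.image g := fun x _ => hc2 x
      exact absurd (Finset.card_le_card this) (by omega)
    obtain ⟨j', hj'⟩ := hex
    have hj'ne : ∀ i : Fin r, j' ≠ g i := by
      intro i hcontra
      exact hj' (hcontra ▸ Finset.mem_image_of_mem g (Finset.mem_univ i))
    have hbj' : ∀ i : Fin r, r ^ 2 * bc j' i ≤ s - 1 := by
      intro i
      have h1 : bc j' i + bc (g i) i ≤ Qc i := hbQ i j' (g i) (hj'ne i)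
      have h2 : bc j' i ≤ Qc i - m i := by rw [hg i] at *; omega
      have h4 := hc i
      have h5 : r ^ 2 * bc j' i ≤ r ^ 2 * (Qc i - m i) := Nat.mul_le_mul_left _ h2
      omega
    have hPj' : r ^ 2 * Pc j' ≤ r * (s - 1) := by
      rw [← hPfib j', Finset.mul_sum]
      calc ∑ i : Fin r, r ^ 2 * bc j' i ≤ ∑ _i : Fin r, (s - 1) :=
            Finset.sum_le_sum (fun i _ => hbj' i)
        _ = r * (s - 1) := by simp [mul_comm]
    have hrPj' : r * Pc j' ≤ s - 1 := by
      have : r * (r * Pc j') ≤ r * (s - 1) := by ring_nf; ring_nf at hPj'; omega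
      exact Nat.le_of_mul_le_mul_left this hr0
    -- contradiction with balance
    have hb1 := hnat_bal_p j'
    have hb0 := hPpos j'
    have hj'0 : j' ≠ j0 := by
      intro hcontra
      exact hj' (hcontra ▸ hg1 ▸ Finset.mem_image_of_mem g (Finset.mem_univ i1))
    have hPP : Pc j0 + Pc j' ≤ n := by
      rw [← hPsum]
      exact Finset.add_le_sum (f := Pc) (fun _ _ => Nat.zero_le _)
        (Finset.mem_univ j0) (Finset.mem_univ j') (Ne.symm hj'0)
    have h2s : s + s ≤ Pc j0 := le_trans (by omega) (hbP j0 i1 i2 h12)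
    have hlink : 2 * r * Pc j' = 2 * (r * Pc j') := by ring
    omega
  obtain ⟨istar, histar⟩ := hkey
  -- build the two vertex sets A and B inside column istar
  set A : Finset (Fin n) :=
    Finset.univ.filter (fun v => p v = g istar ∧ q v = istar) with hAdef
  set B : Finset (Fin n) :=
    Finset.univ.filter (fun v => ¬ p v = g istar ∧ q v = istar) with hBdef
  have hAcard : A.card = m istar := by rw [hg istar]
  have hABcard : A.card + B.card = Qc istar := by
    rw [hAdef, hBdef, hQcdef]
    have h1 : (Finset.univ.filter (fun v => p v = g istar ∧ q v = istar))
        = (Finset.univ.filter (fun v : Fin n => q v = istar)).filter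
            (fun v => p v = g istar) := by
      ext v; simp [and_comm]
    have h2 : (Finset.univ.filter (fun v => ¬ p v = g istar ∧ q v = istar))
        = (Finset.univ.filter (fun v : Fin n => q v = istar)).filter
            (fun v => ¬ p v = g istar) := by
      ext v; simp [and_comm]
    rw [h1, h2]
    exact Finset.card_filter_add_card_filter_not _
  have hBcard : B.card = Qc istar - m istar := by omega
  -- the missing edges
  set G : SimpleGraph (Fin n) := partGraph p with hGdef
  set Gi : SimpleGraph (Fin n) := partGraph p ⊓ partGraph q with hGidef
  set S : Set (Sym2 (Fin n)) := G.edgeSet \ Gi.edgeSet with hSdef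
  have hABS : A.card * B.card ≤ S.ncard := by
    have hinj : Set.InjOn (fun x : Fin n × Fin n => s(x.1, x.2)) ((A ×ˢ B) : Finset _) := by
      rintro ⟨a, b⟩ hab ⟨a', b'⟩ hab' h
      simp only [Finset.coe_product, Set.mem_prod, Finset.mem_coe] at hab hab'
      rcases Sym2.eq_iff.mp h with ⟨h1, h2⟩ | ⟨h1, h2⟩
      · change a = a' at h1
        change b = b' at h2
        simp [Prod.ext_iff, h1, h2]
      · exfalso
        change a = b' at h1
        have ha : p a = g istar := (Finset.mem_filter.mp hab.1).2.1
        have hb' : ¬ p b' = g istar := (Finset.mem_filter.mp hab'.2).2.1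
        rw [h1] at ha
        exact hb' ha
    have himage : ((A ×ˢ B).image fun x : Fin n × Fin n => s(x.1, x.2)) ⊆ S.toFinset := by
      intro e he
      simp only [Finset.mem_image, Finset.mem_product] at he
      obtain ⟨⟨a, b⟩, ⟨ha, hb⟩, rfl⟩ := he
      have hpa : p a = g istar := (Finset.mem_filter.mp ha).2.1
      have hqa : q a = istar := (Finset.mem_filter.mp ha).2.2
      have hpb : ¬ p b = g istar := (Finset.mem_filter.mp hb).2.1
      have hqb : q b = istar := (Finset.mem_filter.mp hb).2.2
      rw [Set.mem_toFinset, hSdef]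
      constructor
      · rw [SimpleGraph.mem_edgeSet, hGdef]
        show p a ≠ p b
        rw [hpa]; exact fun hcon => hpb hcon.symm
      · rw [SimpleGraph.mem_edgeSet, hGidef, SimpleGraph.inf_adj]
        rintro ⟨-, hadj⟩
        exact hadj (hqa.trans hqb.symm)
    calc A.card * B.card = (A ×ˢ B).card := (Finset.card_product _ _).symm
      _ = ((A ×ˢ B).image fun x : Fin n × Fin n => s(x.1, x.2)).card :=
          (Finset.card_image_of_injOn hinj).symm
      _ ≤ S.toFinset.card := Finset.card_le_card himage
      _ = S.ncard := (Set.ncard_eq_toFinset_card' S).symm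
  -- edge count identity
  have hsub : Gi.edgeSet ⊆ G.edgeSet := SimpleGraph.edgeSet_mono inf_le_left
  have hle : Gi.edgeSet.ncard ≤ G.edgeSet.ncard :=
    Set.ncard_le_ncard hsub (Set.toFinite _)
  have hEq : Gi.edgeSet.ncard + S.ncard = G.edgeSet.ncard := by
    rw [hSdef, Set.ncard_diff hsub (Set.toFinite _)]
    omega
  -- final arithmetic, first in ℕ
  have hnatfinal : s * n ≤ 2 * r ^ 4 * (A.card * B.card) := by
    have f1 : n ≤ 2 * r * Qc istar := hnat_bal_q istar
    have f2 : Qc istar ≤ r * A.card := hAcard ▸ hQm istar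
    have f3 : s ≤ r ^ 2 * B.card := hBcard ▸ histar
    calc s * n ≤ (r ^ 2 * B.card) * (2 * r * Qc istar) := Nat.mul_le_mul f3 f1
      _ ≤ (r ^ 2 * B.card) * (2 * r * (r * A.card)) :=
          Nat.mul_le_mul_left _ (Nat.mul_le_mul_left _ f2)
      _ = 2 * r ^ 4 * (A.card * B.card) := by ring
  have hnatS : s * n ≤ 2 * r ^ 4 * S.ncard :=
    le_trans hnatfinal (Nat.mul_le_mul_left _ hABS)
  -- conclude in ℝ
  have hr4 : (0 : ℝ) < 2 * (r : ℝ) ^ 4 := by positivity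
  have hSreal : (s : ℝ) * n / (2 * (r : ℝ) ^ 4) ≤ (S.ncard : ℝ) := by
    rw [div_le_iff₀ hr4]
    have : ((s * n : ℕ) : ℝ) ≤ ((2 * r ^ 4 * S.ncard : ℕ) : ℝ) := Nat.cast_le.mpr hnatS
    push_cast at this
    linarith
  have hEqreal : (Gi.edgeSet.ncard : ℝ) = (G.edgeSet.ncard : ℝ) - (S.ncard : ℝ) := by
    have : ((Gi.edgeSet.ncard + S.ncard : ℕ) : ℝ) = (G.edgeSet.ncard : ℝ) :=
      congrArg _ hEq
    push_cast at this
    linarith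
  rw [hEqreal]
  linarith
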